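/- Let x₀ be an extreme point of the unit ball of a finite-dimensional real polyhedral Banach space X of dimension n, and let T : X → X be linear with numerical radius 0. Then T x₀ = 0. -/

import Mathlib

open Set

lemma extremePoints_polyhedron_finite {V : Type*} [AddCommGroup V] [Module ℝ V]
    {ι : Type*} [Fintype ι] (f : ι → V →ₗ[ℝ] ℝ) (c : ι → ℝ) :
    (Set.extremePoints ℝ {x : V | ∀ i, f i x ≤ c i}).Finite := by
  classical
  set S : Set V := {x : V | ∀ i, f i x ≤ c i} with hS
  have hinj : Set.InjOn (fun x => {i | f i x = c i}) (Set.extremePoints ℝ S) := by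
    intro x hx y hy hxy
    by_contra hne
    set d : V := x - y with hd
    have hdne : d ≠ 0 := sub_ne_zero.2 hne
    -- choose t
    set vals : Finset ℝ := insert (1 : ℝ)
      (Finset.image (fun i => if f i x = c i then 1 else (c i - f i x) / max (f i d) 1)
        Finset.univ) with hvals
    have hvne : vals.Nonempty := ⟨1, Finset.mem_insert_self _ _⟩
    set t : ℝ := vals.min' hvne with ht
    have hxS : x ∈ S := hx.1
    have hyS : y ∈ S := hy.1
    have htpos : 0 < t := by
      rw [ht]
      apply (Finset.lt_min'_iff _ _).2
      intro z hz
      rw [hvals] at hz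
      rcases Finset.mem_insert.1 hz with rfl | hz
      · exact one_pos
      · obtain ⟨i, _, rfl⟩ := Finset.mem_image.1 hz
        by_cases hi : f i x = c i
        · simp [hi]
        · simp only [hi, if_false]
          apply div_pos
          · have := hxS i
            exact sub_pos.2 (lt_of_le_of_ne this hi)
          · exact lt_of_lt_of_le one_pos (le_max_right _ _)
    have hmem : x + t • d ∈ S := by
      intro i
      by_cases hi : f i x = c i
      · have hiy : f i y = c i := by
          have hxy' : {j | f j x = c j} = {j | f j y = c j} := hxy
          exact (Set.ext_iff.1 hxy' i).1 hi
        have hfd : f i d = 0 := by simp [hd, map_sub, hi, hiy]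
        simp [map_add, map_smul, hfd, hi]
      · have hlt : f i x < c i := lt_of_le_of_ne (hxS i) hi
        have hts : t ≤ (c i - f i x) / max (f i d) 1 := by
          apply Finset.min'_le
          rw [hvals]
          refine Finset.mem_insert_of_mem ?_
          refine Finset.mem_image.2 ⟨i, Finset.mem_univ _, ?_⟩
          simp [hi]
        have hmaxpos : (0:ℝ) < max (f i d) 1 := lt_of_lt_of_le one_pos (le_max_right _ _)
        have h1 : t * max (f i d) 1 ≤ c i - f i x := by
          rw [← le_div_iff₀ hmaxpos] at *
          exact hts
        have h2 : t * f i d ≤ t * max (f i d) 1 :=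
          mul_le_mul_of_nonneg_left (le_max_left _ _) htpos.le
        have : f i (x + t • d) = f i x + t * f i d := by simp [map_add, map_smul]
        rw [this]
        linarith
    -- x is in the open segment between x + t • d and y
    have h1t : (1:ℝ) + t ≠ 0 := by positivity
    have hseg : x ∈ openSegment ℝ (x + t • d) y := by
      refine ⟨1 / (1 + t), t / (1 + t), by positivity, by positivity, ?_, ?_⟩
      · rw [← add_div, div_self h1t]
      · rw [hd]
        match_scalars <;> field_simp <;> ring
    have := hx.2 hmem hyS hseg
    have htd : t • d = 0 := by
      have := congrArg (fun z => z - x) this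
      simpa [add_sub_cancel_left] using this
    exact hdne (by simpa [htpos.ne'] using (smul_eq_zero.1 htd))
  exact Set.Finite.of_finite_image (Set.toFinite _) hinj


/-- if `x₀` is an extreme point of the unit ball of a finite-dimensional real
polyhedral Banach space and `T` has numerical radius `0` (i.e. `f (T x) = 0` for every
unit vector `x` and support functional `f` at `x`), then `T x₀ = 0`. -/
theorem numerical_radius_zero_kills_extreme_points (X : Type*) [NormedAddCommGroup X]
    [NormedSpace ℝ X] [FiniteDimensional ℝ X]
    (hpoly : (Set.extremePoints ℝ (Metric.closedBall (0 : X) 1)).Finite)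
    (x₀ : X) (hx₀ : x₀ ∈ Set.extremePoints ℝ (Metric.closedBall (0 : X) 1))
    (T : X →L[ℝ] X)
    (h : ∀ (x : X) (f : X →L[ℝ] ℝ), ‖x‖ = 1 → ‖f‖ = 1 → f x = 1 → f (T x) = 0) :
    T x₀ = 0 := by
  classical
  by_cases hx0 : x₀ = 0
  · simp [hx0]
  set B : Set X := Metric.closedBall 0 1 with hB
  have hx₀ball : ‖x₀‖ ≤ 1 := by
    have := hx₀.1
    rw [hB, Metric.mem_closedBall, dist_zero_right] at this
    exact this
  -- x₀ has norm 1
  have hnorm : ‖x₀‖ = 1 := by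
    by_contra hne
    have hlt : ‖x₀‖ < 1 := lt_of_le_of_ne hx₀ball hne
    set t : ℝ := 1 - ‖x₀‖ with ht
    have htpos : 0 < t := by rw [ht]; linarith
    have h1 : (1 + t) • x₀ ∈ B := by
      rw [hB, Metric.mem_closedBall, dist_zero_right, norm_smul, Real.norm_eq_abs,
        abs_of_pos (by linarith : (0:ℝ) < 1 + t)]
      nlinarith [norm_nonneg x₀]
    have h2 : (1 - t) • x₀ ∈ B := by
      rw [hB, Metric.mem_closedBall, dist_zero_right, norm_smul, Real.norm_eq_abs,
        abs_of_nonneg (by nlinarith [norm_nonneg x₀] : (0:ℝ) ≤ 1 - t)]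
      nlinarith [norm_nonneg x₀]
    have hseg : x₀ ∈ openSegment ℝ ((1 + t) • x₀) ((1 - t) • x₀) := by
      refine ⟨1/2, 1/2, by norm_num, by norm_num, by norm_num, ?_⟩
      match_scalars <;> ring
    have heq := hx₀.2 h1 h2 hseg
    have htx : t • x₀ = 0 := by
      have : (1 + t) • x₀ - x₀ = 0 := by rw [heq]; simp
      calc t • x₀ = (1 + t) • x₀ - x₀ := by module
        _ = 0 := this
    exact hx0 (by simpa [htpos.ne'] using smul_eq_zero.1 htx)
  -- the unit ball is the convex hull of its extreme points
  have hBcomp : IsCompact B := isCompact_closedBall 0 1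
  have hBconv : Convex ℝ B := convex_closedBall 0 1
  have hBconvE : B = convexHull ℝ (Set.extremePoints ℝ B) := by
    have hKM := closure_convexHull_extremePoints hBcomp hBconv
    exact ((hpoly.isClosed_convexHull (𝕜 := ℝ)).closure_eq.symm.trans hKM).symm
  -- the dual ball as a polyhedron
  set D : Set (X →L[ℝ] ℝ) := Metric.closedBall 0 1 with hD
  have hD_eq : D = {φ : X →L[ℝ] ℝ | ∀ e ∈ Set.extremePoints ℝ B, φ e ≤ 1} := by
    ext φ
    constructor
    · intro hφ e he
      have hφn : ‖φ‖ ≤ 1 := by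
        rw [hD, Metric.mem_closedBall, dist_zero_right] at hφ; exact hφ
      have hen : ‖e‖ ≤ 1 := by
        have := (extremePoints_subset he)
        rw [hB, Metric.mem_closedBall, dist_zero_right] at this; exact this
      calc φ e ≤ |φ e| := le_abs_self _
        _ = ‖φ e‖ := (Real.norm_eq_abs _).symm
        _ ≤ ‖φ‖ * ‖e‖ := φ.le_opNorm e
        _ ≤ 1 := by nlinarith [norm_nonneg φ]
    · intro hφ
      rw [hD, Metric.mem_closedBall, dist_zero_right]
      have key : ∀ z ∈ B, φ z ≤ 1 := by
        intro z hz
        have hz' : z ∈ convexHull ℝ (Set.extremePoints ℝ B) := hBconvE ▸ hz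
        have hsub : convexHull ℝ (Set.extremePoints ℝ B) ⊆ {w : X | φ w ≤ 1} :=
          convexHull_min (fun e he => hφ e he)
            (convex_halfSpace_le ⟨φ.map_add, φ.map_smul⟩ 1)
        exact hsub hz'
      refine ContinuousLinearMap.opNorm_le_bound φ zero_le_one ?_
      intro x
      rcases eq_or_ne x 0 with rfl | hx
      · simp
      · have hxn : 0 < ‖x‖ := norm_pos_iff.2 hx
        have hz1 : ‖x‖⁻¹ • x ∈ B := by
          rw [hB, Metric.mem_closedBall, dist_zero_right, norm_smul, Real.norm_eq_abs,
            abs_of_pos (inv_pos.2 hxn), inv_mul_cancel₀ hxn.ne']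
        have hz2 : -(‖x‖⁻¹ • x) ∈ B := by
          rw [hB, Metric.mem_closedBall, dist_zero_right, norm_neg, norm_smul,
            Real.norm_eq_abs, abs_of_pos (inv_pos.2 hxn), inv_mul_cancel₀ hxn.ne']
        have e1 : φ (‖x‖⁻¹ • x) ≤ 1 := key _ hz1
        have e2 : φ (-(‖x‖⁻¹ • x)) ≤ 1 := key _ hz2
        rw [map_smul, smul_eq_mul] at e1
        rw [map_neg, map_smul, smul_eq_mul] at e2
        have e1' : φ x ≤ ‖x‖ := by
          have h' := mul_le_mul_of_nonneg_left e1 hxn.le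
          rwa [mul_one, ← mul_assoc, mul_inv_cancel₀ hxn.ne', one_mul] at h'
        have e2' : -(φ x) ≤ ‖x‖ := by
          have h' := mul_le_mul_of_nonneg_left e2 hxn.le
          rwa [mul_one, mul_neg, ← mul_assoc, mul_inv_cancel₀ hxn.ne', one_mul] at h'
        rw [one_mul, Real.norm_eq_abs, abs_le]
        constructor <;> linarith
  -- the dual ball has finitely many extreme points
  have hGfin : (Set.extremePoints ℝ D).Finite := by
    haveI := hpoly.fintype
    have hfin := extremePoints_polyhedron_finite
      (ι := ↥(Set.extremePoints ℝ B))
      (f := fun e => ({ toFun := fun φ : X →L[ℝ] ℝ => φ e.1,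
                        map_add' := fun φ ψ => rfl,
                        map_smul' := fun r φ => rfl } : (X →L[ℝ] ℝ) →ₗ[ℝ] ℝ))
      (c := fun _ => 1)
    have : D = {φ : X →L[ℝ] ℝ | ∀ i : ↥(Set.extremePoints ℝ B), φ i.1 ≤ 1} := by
      rw [hD_eq]; ext φ; simp [Subtype.forall]
    rw [this]
    exact hfin
  -- dual ball is convex hull of its extreme points
  have hDcomp : IsCompact D := isCompact_closedBall 0 1
  have hDconv : Convex ℝ D := convex_closedBall 0 1
  have hDconvE : D = convexHull ℝ (Set.extremePoints ℝ D) := by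
    have hKM := closure_convexHull_extremePoints hDcomp hDconv
    exact ((hGfin.isClosed_convexHull (𝕜 := ℝ)).closure_eq.symm.trans hKM).symm
  -- norm criterion
  have hcrit : ∀ z : X, (∀ g ∈ Set.extremePoints ℝ D, g z ≤ 1) → ‖z‖ ≤ 1 := by
    intro z hz
    by_contra hgt
    push_neg at hgt
    have hz0 : z ≠ 0 := by
      intro hzz; rw [hzz] at hgt; simp at hgt; linarith
    obtain ⟨g, hg1, hgz⟩ := exists_dual_vector ℝ z (norm_ne_zero_iff.2 hz0)
    have hgD : g ∈ D := by
      rw [hD, Metric.mem_closedBall, dist_zero_right, hg1]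
    have hgc : g ∈ convexHull ℝ (Set.extremePoints ℝ D) := hDconvE ▸ hgD
    have hsub : convexHull ℝ (Set.extremePoints ℝ D) ⊆ {ψ : X →L[ℝ] ℝ | ψ z ≤ 1} :=
      convexHull_min hz (convex_halfSpace_le ⟨fun a b => rfl, fun r a => rfl⟩ 1)
    have : g z ≤ 1 := hsub hgc
    rw [hgz] at this
    simp at this
    linarith
  -- now the main argument
  set v : X := T x₀ with hv
  by_cases hv0 : v = 0
  · exact hv0
  have hvpos : 0 < ‖v‖ := norm_pos_iff.2 hv0
  set Gs : Finset (X →L[ℝ] ℝ) := hGfin.toFinset with hGs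
  set vals : Finset ℝ := insert (1:ℝ)
    (Finset.image (fun g => 1 - g x₀) (Gs.filter (fun g => g x₀ < 1))) with hvals
  have hvne : vals.Nonempty := ⟨1, Finset.mem_insert_self _ _⟩
  set δ : ℝ := vals.min' hvne with hδ
  have hδpos : 0 < δ := by
    rw [hδ]
    apply (Finset.lt_min'_iff _ _).2
    intro z hz
    rw [hvals] at hz
    rcases Finset.mem_insert.1 hz with rfl | hz
    · exact one_pos
    · obtain ⟨g, hg, rfl⟩ := Finset.mem_image.1 hz
      have := (Finset.mem_filter.1 hg).2
      linarith
  have hδle : ∀ g ∈ Set.extremePoints ℝ D, g x₀ < 1 → δ ≤ 1 - g x₀ := by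
    intro g hg hlt
    apply Finset.min'_le
    rw [hvals]
    refine Finset.mem_insert_of_mem ?_
    refine Finset.mem_image.2 ⟨g, ?_, rfl⟩
    exact Finset.mem_filter.2 ⟨by rw [hGs]; exact hGfin.mem_toFinset.2 hg, hlt⟩
  set ε : ℝ := δ / (‖v‖ + 1) with hε
  have hεpos : 0 < ε := by rw [hε]; positivity
  have hεv : ε * ‖v‖ < δ := by
    rw [hε, div_mul_eq_mul_div, div_lt_iff₀ (by positivity : (0:ℝ) < ‖v‖ + 1)]
    nlinarith
  have key : ∀ s : ℝ, |s| ≤ ε → x₀ + s • v ∈ B := by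
    intro s hs
    rw [hB, Metric.mem_closedBall, dist_zero_right]
    apply hcrit
    intro g hg
    have hgD' : g ∈ D := extremePoints_subset hg
    have hgn : ‖g‖ ≤ 1 := by
      rw [hD, Metric.mem_closedBall, dist_zero_right] at hgD'; exact hgD'
    have hgx : g x₀ ≤ 1 := by
      calc g x₀ ≤ |g x₀| := le_abs_self _
        _ = ‖g x₀‖ := (Real.norm_eq_abs _).symm
        _ ≤ ‖g‖ * ‖x₀‖ := g.le_opNorm x₀
        _ ≤ 1 := by rw [hnorm]; simpa using hgn
    have hsv : |g (s • v)| ≤ ε * ‖v‖ := by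
      rw [map_smul, smul_eq_mul, abs_mul]
      have h1 : |g v| ≤ ‖v‖ := by
        calc |g v| = ‖g v‖ := (Real.norm_eq_abs _).symm
          _ ≤ ‖g‖ * ‖v‖ := g.le_opNorm v
          _ ≤ ‖v‖ := by nlinarith [norm_nonneg v]
      have h0 : (0:ℝ) ≤ |g v| := abs_nonneg _
      nlinarith [abs_nonneg s]
    rcases eq_or_lt_of_le hgx with heq | hlt
    · -- supporting functional: g v = 0
      have hgn1 : ‖g‖ = 1 := by
        refine le_antisymm hgn ?_
        calc (1:ℝ) = g x₀ := heq.symm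
          _ ≤ |g x₀| := le_abs_self _
          _ = ‖g x₀‖ := (Real.norm_eq_abs _).symm
          _ ≤ ‖g‖ * ‖x₀‖ := g.le_opNorm x₀
          _ = ‖g‖ := by rw [hnorm, mul_one]
      have hgv : g v = 0 := by
        rw [hv]; exact h x₀ g hnorm hgn1 heq
      rw [map_add, map_smul, smul_eq_mul, hgv, mul_zero, add_zero]
      exact hgx
    · have hδ' : δ ≤ 1 - g x₀ := hδle g hg hlt
      rw [map_add]
      have := abs_le.1 hsv
      linarith
  have h1 : x₀ + ε • v ∈ B := key ε (by rw [abs_of_pos hεpos])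
  have h2 : x₀ + (-ε) • v ∈ B := key (-ε) (by rw [abs_neg, abs_of_pos hεpos])
  have hseg : x₀ ∈ openSegment ℝ (x₀ + ε • v) (x₀ + (-ε) • v) := by
    refine ⟨1/2, 1/2, by norm_num, by norm_num, by norm_num, ?_⟩
    match_scalars <;> ring
  have heq := hx₀.2 h1 h2 hseg
  have hev : ε • v = 0 := by
    have : (x₀ + ε • v) - x₀ = 0 := by rw [heq]; simp
    calc ε • v = (x₀ + ε • v) - x₀ := by module
      _ = 0 := this
  exact absurd (by simpa [hεpos.ne'] using smul_eq_zero.1 hev) hv0
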